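/- Let Q be a quiver, k a vertex, and S_k the simple at k. Let mod(Q)_k = {M : Hom(S_k, M) = 0} and mod(Q)^k = {M : Hom(M, S_k) = 0}, and let ⟨S_k⟩ be the subcategory of modules all of whose composition factors are S_k (i.e. direct sums of S_k when k has no loops). Then (⟨S_k⟩, mod(Q)^k) and (mod(Q)_k, ⟨S_k⟩) are torsion pairs in mod kQ, and hence in the completed Hall algebra: χ(mod(Q)_k)·χ(⟨S_k⟩) = χ = χ(⟨S_k⟩)·χ(mod(Q)^k). -/

import Mathlib

set_option linter.unusedSectionVars false
set_option maxHeartbeats 1000000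


namespace QP

structure FQuiver where
  V : Type
  E : Type
  [fV : Fintype V]
  [fE : Fintype E]
  [dV : DecidableEq V]
  [dE : DecidableEq E]
  src : E → V
  tgt : E → V

attribute [instance] FQuiver.fV FQuiver.fE FQuiver.dV FQuiver.dE

variable (Q : FQuiver) (K : Type) [Field K] [Fintype K]

/-- A finite-dimensional representation of the quiver `Q` over `K`. -/
structure Rep where
  d : Q.V → ℕ
  m : ∀ e : Q.E, (Fin (d (Q.src e)) → K) →ₗ[K] (Fin (d (Q.tgt e)) → K)

variable {Q K}

/-- Morphisms of representations. -/
structure Hom (M N : Rep Q K) where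
  f : ∀ v, (Fin (M.d v) → K) →ₗ[K] (Fin (N.d v) → K)
  comm : ∀ e, (f (Q.tgt e)).comp (M.m e) = (N.m e).comp (f (Q.src e))

def Hom.IsIso {M N : Rep Q K} (φ : Hom M N) : Prop := ∀ v, Function.Bijective (φ.f v)

/-- Isomorphism of representations. -/
def repIso (M N : Rep Q K) : Prop := ∃ φ : Hom M N, φ.IsIso

/-- The number of automorphisms `a_M = |Aut(M)|`. -/
noncomputable def aut (M : Rep Q K) : ℕ := Nat.card {φ : Hom M M // φ.IsIso}

/-- `ι, π` form a short exact sequence `0 → V' → W → U → 0`. -/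
def IsExactPair {V' W U : Rep Q K} (ι : Hom V' W) (π : Hom W U) : Prop :=
  ∀ v, Function.Injective (ι.f v) ∧ Function.Surjective (π.f v) ∧
    LinearMap.range (ι.f v) = LinearMap.ker (π.f v)

/-- Number of exact pairs `0 → V' → W → U → 0`; equals `F^W_{U V'} · a_U · a_{V'}`. -/
noncomputable def epairs (U V' W : Rep Q K) : ℕ :=
  Nat.card {p : Hom V' W × Hom W U // IsExactPair p.1 p.2}

variable (Q K) in
/-- Representations with a fixed dimension vector. -/
def RepOf (d : Q.V → ℕ) := ∀ e : Q.E, (Fin (d (Q.src e)) → K) →ₗ[K] (Fin (d (Q.tgt e)) → K)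

def RepOf.toRep {d : Q.V → ℕ} (m : RepOf Q K d) : Rep Q K := ⟨d, m⟩

variable (Q K) in
/-- `|GL_d| = ∏_v |GL_{d v}(K)|`. -/
noncomputable def glcard (d : Q.V → ℕ) : ℕ :=
  ∏ v : Q.V, Nat.card ((Fin (d v) → K) ≃ₗ[K] (Fin (d v) → K))

/-- A Hall-algebra element constant on isomorphism classes. -/
def IsoInvariant (h : Rep Q K → ℚ) : Prop := ∀ M N, repIso M N → h M = h N

/-- The Hall product.  For iso-invariant `h₁ h₂` this computes
`([U][V] = ∑_W F^W_{UV}[W])`-multiplication, coefficientwise: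
`(h₁ * h₂)(W) = ∑_{[U],[V]} h₁(U) h₂(V) F^W_{UV}`, using that the number of exact
pairs is `F^W_{UV} a_U a_V` and that each iso class of dimension `δ` has
`glcard δ / a` objects. -/
noncomputable def hmul (h₁ h₂ : Rep Q K → ℚ) : Rep Q K → ℚ := fun W =>
  ∑ᶠ (δ : Q.V → ℕ) (_ : ∀ v, δ v ≤ W.d v) (mV : RepOf Q K δ)
      (mU : RepOf Q K fun v => W.d v - δ v),
    h₁ mU.toRep * h₂ mV.toRep * (epairs mU.toRep mV.toRep W : ℚ) /
      ((glcard Q K δ : ℚ) * (glcard Q K fun v => W.d v - δ v))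

/-- The unit `[0]` of the Hall algebra. -/
noncomputable def hone : Rep Q K → ℚ := fun W => if W.d = fun _ => 0 then 1 else 0

open Classical in
/-- `χ(𝒞) = ∑_{M ∈ 𝒞} [M]` for a (iso-closed) subcategory cut out by `P`. -/
noncomputable def chi (P : Rep Q K → Prop) : Rep Q K → ℚ := fun M => if P M then 1 else 0

end QP

namespace QP

variable {Q : FQuiver} {K : Type} [Field K] [Fintype K]

variable (Q K) in
/-- The simple representation `S_k` at the vertex `k`. -/
def simpleAt (k : Q.V) : Rep Q K :=
  ⟨fun v => if v = k then 1 else 0, fun _ => 0⟩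

/-- `(T, F)` is a torsion pair: both classes are closed under isomorphism,
`Hom(T, F) = 0`, and every module has a (unique) short exact sequence
`0 → tM → M → M/tM → 0` with `tM ∈ T` and `M/tM ∈ F`. -/
def IsTorsionPair (T F : Rep Q K → Prop) : Prop :=
  (∀ M N, repIso M N → (T M ↔ T N)) ∧
  (∀ M N, repIso M N → (F M ↔ F N)) ∧
  (∀ (M N : Rep Q K) (φ : Hom M N), T M → F N → ∀ v, φ.f v = 0) ∧
  (∀ W : Rep Q K, ∃ (L N : Rep Q K) (ι : Hom L W) (π : Hom W N),
    T L ∧ F N ∧ IsExactPair ι π) ∧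
  (∀ (W L₁ N₁ L₂ N₂ : Rep Q K) (ι₁ : Hom L₁ W) (π₁ : Hom W N₁)
      (ι₂ : Hom L₂ W) (π₂ : Hom W N₂),
    T L₁ → F N₁ → IsExactPair ι₁ π₁ → T L₂ → F N₂ → IsExactPair ι₂ π₂ →
    repIso L₁ L₂ ∧ repIso N₁ N₂)

open Module LinearMap Function

section Helpers

theorem comp_cast_eq {n : ℕ} (x : Fin n → K) (h : n = n) : x ∘ Fin.cast h = x := by
  funext i; exact congrArg x (Fin.ext rfl)

theorem funLeft_cast_refl {n : ℕ} (h : n = n) (x : Fin n → K) :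
    LinearMap.funLeft K K (Fin.cast h) x = x := comp_cast_eq x h

noncomputable def descend {A B C : Type} [AddCommGroup A] [Module K A] [AddCommGroup B]
    [Module K B] [AddCommGroup C] [Module K C] (p : A →ₗ[K] B) (q : A →ₗ[K] C)
    (hp : Surjective p) (h : ker p ≤ ker q) : B →ₗ[K] C :=
  (Submodule.liftQ (ker p) q h).comp (p.quotKerEquivOfSurjective hp).symm.toLinearMap

theorem descend_apply {A B C : Type} [AddCommGroup A] [Module K A] [AddCommGroup B]
    [Module K B] [AddCommGroup C] [Module K C] (p : A →ₗ[K] B) (q : A →ₗ[K] C)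
    (hp : Surjective p) (h : ker p ≤ ker q) (x : A) : descend p q hp h (p x) = q x := by
  have h1 : (p.quotKerEquivOfSurjective hp).symm (p x) = Submodule.Quotient.mk x := by
    rw [LinearEquiv.symm_apply_eq]; rfl
  simp [descend, h1]

theorem eq_of_comp_surj {A B C : Type} [AddCommGroup A] [Module K A] [AddCommGroup B]
    [Module K B] [AddCommGroup C] [Module K C] {p : A →ₗ[K] B} {f g : B →ₗ[K] C}
    (hp : Surjective p) (h : ∀ x, f (p x) = g (p x)) : f = g := by
  ext b; obtain ⟨x, rfl⟩ := hp b; exact h x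

noncomputable def colift {A B C : Type} [AddCommGroup A] [Module K A] [AddCommGroup B]
    [Module K B] [AddCommGroup C] [Module K C] (i : B →ₗ[K] C) (hi : Injective i)
    (q : A →ₗ[K] C) (hr : range q ≤ range i) : A →ₗ[K] B :=
  (LinearEquiv.ofInjective i hi).symm.toLinearMap.comp
    (q.codRestrict (range i) (fun x => hr ⟨x, rfl⟩))

theorem colift_apply {A B C : Type} [AddCommGroup A] [Module K A] [AddCommGroup B]
    [Module K B] [AddCommGroup C] [Module K C] (i : B →ₗ[K] C) (hi : Injective i)
    (q : A →ₗ[K] C) (hr : range q ≤ range i) (x : A) : i (colift i hi q hr x) = q x := by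
  simp only [colift, LinearMap.coe_comp, comp_apply, LinearEquiv.coe_coe]
  have := congrArg Subtype.val
    ((LinearEquiv.ofInjective i hi).apply_symm_apply (q.codRestrict (range i) (fun x => hr ⟨x, rfl⟩) x))
  simpa using this

def lequivCongr {A B C : Type} [AddCommGroup A] [Module K A] [AddCommGroup B]
    [Module K B] [AddCommGroup C] [Module K C] (u : B ≃ₗ[K] C) :
    (A ≃ₗ[K] B) ≃ (A ≃ₗ[K] C) where
  toFun g := g.trans u
  invFun g := g.trans u.symm
  left_inv g := by ext x; simp
  right_inv g := by ext x; simp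

def lequivCongrL {A B C : Type} [AddCommGroup A] [Module K A] [AddCommGroup B]
    [Module K B] [AddCommGroup C] [Module K C] (u : A ≃ₗ[K] C) :
    (A ≃ₗ[K] B) ≃ (C ≃ₗ[K] B) where
  toFun g := u.symm.trans g
  invFun g := u.trans g
  left_inv g := by ext x; simp
  right_inv g := by ext x; simp

theorem nat_card_sigma {ι : Type} [Fintype ι] (f : ι → Type) [∀ i, Finite (f i)] :
    Nat.card (Σ i, f i) = ∑ i, Nat.card (f i) := by
  classical
  have := fun i => Fintype.ofFinite (f i)
  simp [Nat.card_eq_fintype_card, Fintype.card_sigma]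

theorem card_inj {n a : ℕ} (S : Submodule K (Fin n → K)) (h : finrank K S = a) :
    Nat.card {j : (Fin a → K) →ₗ[K] (Fin n → K) // Injective j ∧ range j = S} =
      Nat.card ((Fin a → K) ≃ₗ[K] (Fin a → K)) := by
  have e1 : {j : (Fin a → K) →ₗ[K] (Fin n → K) // Injective j ∧ range j = S} ≃
      ((Fin a → K) ≃ₗ[K] S) := by
    refine ⟨fun j => (LinearEquiv.ofInjective j.1 j.2.1).trans (LinearEquiv.ofEq _ _ j.2.2),
      fun g => ⟨S.subtype.comp g.toLinearMap, ?_, ?_⟩, fun j => ?_, fun g => ?_⟩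
    · exact S.injective_subtype.comp g.injective
    · rw [LinearMap.range_comp, LinearEquiv.range, Submodule.map_top, Submodule.range_subtype]
    · apply Subtype.ext; ext x; simp
    · ext x; simp
  rw [Nat.card_congr e1]
  have u : S ≃ₗ[K] (Fin a → K) :=
    LinearEquiv.ofFinrankEq _ _ (by rw [h, Module.finrank_fin_fun])
  exact Nat.card_congr (lequivCongr u)

theorem card_surj {n b : ℕ} (S : Submodule K (Fin n → K)) (h : finrank K S + b = n) :
    Nat.card {g : (Fin n → K) →ₗ[K] (Fin b → K) // Surjective g ∧ ker g = S} =
      Nat.card ((Fin b → K) ≃ₗ[K] (Fin b → K)) := by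
  have e1 : {g : (Fin n → K) →ₗ[K] (Fin b → K) // Surjective g ∧ ker g = S} ≃
      (((Fin n → K) ⧸ S) ≃ₗ[K] (Fin b → K)) := by
    refine ⟨fun g => (Submodule.quotEquivOfEq S (ker g.1) g.2.2.symm).trans
        (g.1.quotKerEquivOfSurjective g.2.1),
      fun q => ⟨q.toLinearMap.comp S.mkQ, ?_, ?_⟩, fun g => ?_, fun q => ?_⟩
    · exact q.surjective.comp (Submodule.mkQ_surjective S)
    · rw [LinearMap.ker_comp, LinearEquiv.ker, Submodule.comap_bot, Submodule.ker_mkQ]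
    · apply Subtype.ext; ext x
      simp only [LinearMap.coe_comp, comp_apply, LinearEquiv.coe_coe, LinearEquiv.trans_apply]
      rw [Submodule.mkQ_apply, Submodule.quotEquivOfEq_mk]
      rfl
    · ext x
      obtain ⟨y, rfl⟩ := Submodule.mkQ_surjective S x
      simp only [LinearEquiv.trans_apply]
      rw [Submodule.mkQ_apply, Submodule.quotEquivOfEq_mk]
      rfl
  rw [Nat.card_congr e1]
  have hq : finrank K ((Fin n → K) ⧸ S) = b := by
    have h2 := Submodule.finrank_quotient_add_finrank S
    rw [Module.finrank_fin_fun] at h2; omega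
  have u : ((Fin n → K) ⧸ S) ≃ₗ[K] (Fin b → K) :=
    LinearEquiv.ofFinrankEq _ _ (by rw [hq, Module.finrank_fin_fun])
  exact Nat.card_congr (lequivCongrL u)

end Helpers

instance {A B : Type} [AddCommGroup A] [Module K A] [AddCommGroup B] [Module K B]
    [Finite A] [Finite B] : Finite (A →ₗ[K] B) :=
  Finite.of_injective (fun f => (f : A → B)) DFunLike.coe_injective

theorem ofBij_symm_apply {A B : Type} [AddCommGroup A] [Module K A] [AddCommGroup B]
    [Module K B] (f : A →ₗ[K] B) (hf : Bijective f) (x : A) :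
    (LinearEquiv.ofBijective f hf).symm (f x) = x := by
  apply (LinearEquiv.ofBijective f hf).injective
  rw [LinearEquiv.apply_symm_apply]; rfl

theorem ofBij_apply_symm {A B : Type} [AddCommGroup A] [Module K A] [AddCommGroup B]
    [Module K B] (f : A →ₗ[K] B) (hf : Bijective f) (y : B) :
    f ((LinearEquiv.ofBijective f hf).symm y) = y :=
  (LinearEquiv.ofBijective f hf).apply_symm_apply y

theorem Hom.ext' {M N : Rep Q K} {φ ψ : Hom M N} (h : φ.f = ψ.f) : φ = ψ := by
  cases φ; cases ψ; cases h; rfl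

instance (M N : Rep Q K) : Finite (Hom M N) :=
  Finite.of_injective (fun φ => φ.f) fun _ _ h => Hom.ext' h

instance (d : Q.V → ℕ) : Finite (RepOf Q K d) := by unfold RepOf; infer_instance

theorem glcard_pos (d : Q.V → ℕ) : 0 < glcard Q K d := by
  apply Finset.prod_pos
  intro v _
  have h1 : Nonempty ((Fin (d v) → K) ≃ₗ[K] (Fin (d v) → K)) := ⟨LinearEquiv.refl K _⟩
  have h2 : Finite ((Fin (d v) → K) ≃ₗ[K] (Fin (d v) → K)) :=
    Finite.of_injective (fun e => (e : (Fin (d v) → K) → (Fin (d v) → K))) DFunLike.coe_injective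
  exact Nat.card_pos

theorem subsingleton_fun {n : ℕ} (h : n = 0) : Subsingleton (Fin n → K) := by
  subst h; exact ⟨fun a b => funext fun i => i.elim0⟩

theorem map_zero_src {n : ℕ} {B : Type} [AddCommGroup B] [Module K B] (h : n = 0)
    (f : (Fin n → K) →ₗ[K] B) (x : Fin n → K) : f x = 0 := by
  haveI := subsingleton_fun (K := K) h
  rw [Subsingleton.elim x 0, map_zero]

theorem eq_zero_cod {n : ℕ} (h : n = 0) (y : Fin n → K) : y = 0 := by
  haveI := subsingleton_fun (K := K) h
  exact Subsingleton.elim _ _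

def Hom.comp {A B C : Rep Q K} (g : Hom B C) (f : Hom A B) : Hom A C :=
  ⟨fun v => (g.f v).comp (f.f v), fun e => by
    apply LinearMap.ext; intro x
    have hf := LinearMap.congr_fun (f.comm e) x
    have hg := LinearMap.congr_fun (g.comm e) (f.f (Q.src e) x)
    simp only [LinearMap.coe_comp, comp_apply] at hf hg ⊢
    rw [hf, hg]⟩

noncomputable def Hom.inv {A B : Rep Q K} (φ : Hom A B) (h : φ.IsIso) : Hom B A :=
  ⟨fun v => ((LinearEquiv.ofBijective (φ.f v) (h v)).symm : _ →ₗ[K] _), fun e => by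
    apply LinearMap.ext; intro y
    obtain ⟨x, rfl⟩ := (h (Q.src e)).2 y
    have hc := LinearMap.congr_fun (φ.comm e) x
    simp only [LinearMap.coe_comp, comp_apply, LinearEquiv.coe_coe] at hc ⊢
    rw [← hc, ofBij_symm_apply, ofBij_symm_apply]⟩

theorem Hom.inv_isIso {A B : Rep Q K} (φ : Hom A B) (h : φ.IsIso) : (φ.inv h).IsIso :=
  fun v => (LinearEquiv.ofBijective (φ.f v) (h v)).symm.bijective

theorem Hom.inv_apply {A B : Rep Q K} (φ : Hom A B) (h : φ.IsIso) (v : Q.V)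
    (x : Fin (A.d v) → K) : (φ.inv h).f v (φ.f v x) = x :=
  ofBij_symm_apply (φ.f v) (h v) x

theorem Hom.apply_inv {A B : Rep Q K} (φ : Hom A B) (h : φ.IsIso) (v : Q.V)
    (y : Fin (B.d v) → K) : φ.f v ((φ.inv h).f v y) = y :=
  ofBij_apply_symm (φ.f v) (h v) y

theorem repIso.symm {M N : Rep Q K} (h : repIso M N) : repIso N M := by
  obtain ⟨φ, hφ⟩ := h
  exact ⟨φ.inv hφ, φ.inv_isIso hφ⟩

theorem repIso_d {M N : Rep Q K} (h : repIso M N) (v : Q.V) : M.d v = N.d v := by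
  obtain ⟨φ, hφ⟩ := h
  have := (LinearEquiv.ofBijective (φ.f v) (hφ v)).finrank_eq
  rwa [Module.finrank_fin_fun, Module.finrank_fin_fun] at this

theorem homClass_inv_left (X : Rep Q K) {M N : Rep Q K} (h : repIso M N)
    (hM : ∀ φ : Hom X M, ∀ v, φ.f v = 0) : ∀ φ : Hom X N, ∀ v, φ.f v = 0 := by
  obtain ⟨g, hg⟩ := h
  intro φ v
  apply LinearMap.ext; intro x
  have h0 : ((g.inv hg).comp φ).f v x = 0 := by rw [hM ((g.inv hg).comp φ) v]; rfl
  have h1 : (g.inv hg).f v (φ.f v x) = 0 := h0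
  have h2 := congrArg (g.f v) h1
  rw [g.apply_inv hg v, map_zero] at h2
  exact h2

theorem homClass_inv_right (X : Rep Q K) {M N : Rep Q K} (h : repIso M N)
    (hM : ∀ φ : Hom M X, ∀ v, φ.f v = 0) : ∀ φ : Hom N X, ∀ v, φ.f v = 0 := by
  obtain ⟨g, hg⟩ := h
  intro φ v
  apply LinearMap.ext; intro x
  obtain ⟨y, rfl⟩ := (hg v).2 x
  have h0 : (φ.comp g).f v y = 0 := by rw [hM (φ.comp g) v]; rfl
  exact h0


section Generic

variable (W : Rep Q K) (S : ∀ v, Submodule K (Fin (W.d v) → K))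

/-- The dimension vector of a family of subspaces. -/
noncomputable def dimS : Q.V → ℕ := fun v => finrank K (S v)

theorem dimS_le (v : Q.V) : dimS W S v ≤ W.d v := by
  have := Submodule.finrank_le (S v)
  rwa [Module.finrank_fin_fun] at this

theorem sigmaHomA_ext {d : Q.V → ℕ} {P : ∀ (mV : RepOf Q K d), Hom mV.toRep W → Prop}
    (x y : Σ mV : RepOf Q K d, {ι : Hom mV.toRep W // P mV ι})
    (h1 : x.1 = y.1) (h2 : ∀ v, x.2.1.f v = y.2.1.f v) : x = y := by
  rcases x with ⟨m, ⟨ι, hι⟩⟩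
  rcases y with ⟨m', ⟨ι', hι'⟩⟩
  dsimp at h1; subst h1
  have : ι = ι' := Hom.ext' (funext h2)
  subst this
  rfl

theorem sigmaHomB_ext {d : Q.V → ℕ} {P : ∀ (mU : RepOf Q K d), Hom W mU.toRep → Prop}
    (x y : Σ mU : RepOf Q K d, {π : Hom W mU.toRep // P mU π})
    (h1 : x.1 = y.1) (h2 : ∀ v, x.2.1.f v = y.2.1.f v) : x = y := by
  rcases x with ⟨m, ⟨ι, hι⟩⟩
  rcases y with ⟨m', ⟨ι', hι'⟩⟩
  dsimp at h1; subst h1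
  have : ι = ι' := Hom.ext' (funext h2)
  subst this
  rfl

variable (hS : ∀ (e : Q.E) (x : Fin (W.d (Q.src e)) → K),
  x ∈ S (Q.src e) → W.m e x ∈ S (Q.tgt e))

include hS in
theorem cardA :
    Nat.card (Σ mV : RepOf Q K (dimS W S),
      {ι : Hom mV.toRep W // ∀ v, Injective (ι.f v) ∧ range (ι.f v) = S v}) =
      glcard Q K (dimS W S) := by
  have key : ∀ (J : ∀ v, {j : (Fin (dimS W S v) → K) →ₗ[K] (Fin (W.d v) → K) //
      Injective j ∧ range j = S v}) (e : Q.E),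
      range ((W.m e).comp (J (Q.src e)).1) ≤ range (J (Q.tgt e)).1 := by
    intro J e
    rintro _ ⟨x, rfl⟩
    rw [(J (Q.tgt e)).2.2]
    have hx : (J (Q.src e)).1 x ∈ range (J (Q.src e)).1 := ⟨x, rfl⟩
    rw [(J (Q.src e)).2.2] at hx
    exact hS e _ hx
  have E : (Σ mV : RepOf Q K (dimS W S),
      {ι : Hom mV.toRep W // ∀ v, Injective (ι.f v) ∧ range (ι.f v) = S v}) ≃
      (∀ v, {j : (Fin (dimS W S v) → K) →ₗ[K] (Fin (W.d v) → K) //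
        Injective j ∧ range j = S v}) := by
    refine ⟨fun x => fun v => ⟨x.2.1.f v, x.2.2 v⟩,
      fun J => ⟨fun e => colift (J (Q.tgt e)).1 (J (Q.tgt e)).2.1
          ((W.m e).comp (J (Q.src e)).1) (key J e),
        ⟨⟨fun v => (J v).1, fun e => ?_⟩, fun v => (J v).2⟩⟩, fun x => ?_, fun J => rfl⟩
    · apply LinearMap.ext; intro y
      exact colift_apply _ (J (Q.tgt e)).2.1 _ (key J e) y
    · apply sigmaHomA_ext
      · funext e
        apply LinearMap.ext; intro y
        apply (x.2.2 (Q.tgt e)).1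
        have hco := colift_apply (x.2.1.f (Q.tgt e)) (x.2.2 (Q.tgt e)).1
          ((W.m e).comp (x.2.1.f (Q.src e))) (key (fun v => ⟨x.2.1.f v, x.2.2 v⟩) e) y
        have hc := LinearMap.congr_fun (x.2.1.comm e) y
        simp only [LinearMap.coe_comp, Function.comp_apply] at hco hc ⊢
        exact hco.trans hc.symm
      · intro v; rfl
  rw [Nat.card_congr E, Nat.card_pi]
  exact Finset.prod_congr rfl fun v _ => card_inj (S v) rfl

include hS in
theorem cardB :
    Nat.card (Σ mU : RepOf Q K (fun v => W.d v - dimS W S v),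
      {π : Hom W mU.toRep // ∀ v, Surjective (π.f v) ∧ ker (π.f v) = S v}) =
      glcard Q K (fun v => W.d v - dimS W S v) := by
  have key : ∀ (J : ∀ v, {g : (Fin (W.d v) → K) →ₗ[K] (Fin (W.d v - dimS W S v) → K) //
      Surjective g ∧ ker g = S v}) (e : Q.E),
      ker (J (Q.src e)).1 ≤ ker ((J (Q.tgt e)).1.comp (W.m e)) := by
    intro J e x hx
    rw [LinearMap.mem_ker, LinearMap.comp_apply, ← LinearMap.mem_ker, (J (Q.tgt e)).2.2]
    exact hS e x ((J (Q.src e)).2.2 ▸ hx)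
  have E : (Σ mU : RepOf Q K (fun v => W.d v - dimS W S v),
      {π : Hom W mU.toRep // ∀ v, Surjective (π.f v) ∧ ker (π.f v) = S v}) ≃
      (∀ v, {g : (Fin (W.d v) → K) →ₗ[K] (Fin (W.d v - dimS W S v) → K) //
        Surjective g ∧ ker g = S v}) := by
    refine ⟨fun x => fun v => ⟨x.2.1.f v, x.2.2 v⟩,
      fun J => ⟨fun e => descend (J (Q.src e)).1 ((J (Q.tgt e)).1.comp (W.m e))
          (J (Q.src e)).2.1 (key J e),
        ⟨⟨fun v => (J v).1, fun e => ?_⟩, fun v => (J v).2⟩⟩, fun x => ?_, fun J => rfl⟩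
    · apply LinearMap.ext; intro y
      simp only [LinearMap.coe_comp, Function.comp_apply]
      exact (descend_apply (J (Q.src e)).1 ((J (Q.tgt e)).1.comp (W.m e)) (J (Q.src e)).2.1 (key J e) y).symm
    · apply sigmaHomB_ext
      · funext e
        apply LinearMap.ext; intro z
        obtain ⟨y, rfl⟩ := (x.2.2 (Q.src e)).1 z
        have hd := descend_apply (x.2.1.f (Q.src e)) ((x.2.1.f (Q.tgt e)).comp (W.m e))
          (x.2.2 (Q.src e)).1 (key (fun v => ⟨x.2.1.f v, x.2.2 v⟩) e) y
        have hc := LinearMap.congr_fun (x.2.1.comm e) y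
        simp only [LinearMap.coe_comp, Function.comp_apply] at hd hc ⊢
        exact hd.trans hc
      · intro v; rfl
  rw [Nat.card_congr E, Nat.card_pi]
  refine Finset.prod_congr rfl fun v _ => card_surj (S v) ?_
  have := dimS_le W S v
  simp only [dimS] at this ⊢
  omega

include hS in
theorem card_big :
    Nat.card (Σ (mV : RepOf Q K (dimS W S)) (mU : RepOf Q K fun v => W.d v - dimS W S v),
      {p : Hom mV.toRep W × Hom W mU.toRep //
        IsExactPair p.1 p.2 ∧ ∀ v, range (p.1.f v) = S v}) =
      glcard Q K (dimS W S) * glcard Q K (fun v => W.d v - dimS W S v) := by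
  have E : (Σ (mV : RepOf Q K (dimS W S)) (mU : RepOf Q K fun v => W.d v - dimS W S v),
      {p : Hom mV.toRep W × Hom W mU.toRep //
        IsExactPair p.1 p.2 ∧ ∀ v, range (p.1.f v) = S v}) ≃
      ((Σ mV : RepOf Q K (dimS W S),
        {ι : Hom mV.toRep W // ∀ v, Injective (ι.f v) ∧ range (ι.f v) = S v}) ×
       (Σ mU : RepOf Q K (fun v => W.d v - dimS W S v),
        {π : Hom W mU.toRep // ∀ v, Surjective (π.f v) ∧ ker (π.f v) = S v})) := by
    refine ⟨fun x => (⟨x.1, x.2.2.1.1, fun v => ⟨(x.2.2.2.1 v).1, x.2.2.2.2 v⟩⟩,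
        ⟨x.2.1, x.2.2.1.2, fun v => ⟨(x.2.2.2.1 v).2.1, by
          rw [← (x.2.2.2.1 v).2.2]; exact x.2.2.2.2 v⟩⟩),
      fun y => ⟨y.1.1, y.2.1, ⟨(y.1.2.1, y.2.2.1), fun v =>
        ⟨(y.1.2.2 v).1, (y.2.2.2 v).1, by rw [(y.1.2.2 v).2, (y.2.2.2 v).2]⟩,
        fun v => (y.1.2.2 v).2⟩⟩, fun x => ?_, fun y => ?_⟩
    · rcases x with ⟨mV, mU, ⟨⟨i, p⟩, hex, hr⟩⟩; rfl
    · rcases y with ⟨⟨mV, i, hi⟩, ⟨mU, p, hp⟩⟩; rfl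
  rw [Nat.card_congr E, Nat.card_prod, cardA W S hS, cardB W S hS]

theorem chi_mul_chi_mul_epairs (P1 P2 : Rep Q K → Prop)
    (hforce : ∀ (δ : Q.V → ℕ) (mV : RepOf Q K δ) (mU : RepOf Q K fun v => W.d v - δ v)
      (ι : Hom mV.toRep W) (π : Hom W mU.toRep), IsExactPair ι π → P1 mU.toRep →
      P2 mV.toRep → ∀ v, range (ι.f v) = S v)
    (hback : ∀ (mV : RepOf Q K (dimS W S)) (mU : RepOf Q K fun v => W.d v - dimS W S v)
      (ι : Hom mV.toRep W) (π : Hom W mU.toRep), IsExactPair ι π →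
      (∀ v, range (ι.f v) = S v) → P1 mU.toRep ∧ P2 mV.toRep)
    (mV : RepOf Q K (dimS W S)) (mU : RepOf Q K fun v => W.d v - dimS W S v) :
    chi P1 mU.toRep * chi P2 mV.toRep * (epairs mU.toRep mV.toRep W : ℚ) =
      (Nat.card {p : Hom mV.toRep W × Hom W mU.toRep //
        IsExactPair p.1 p.2 ∧ ∀ v, range (p.1.f v) = S v} : ℚ) := by
  classical
  by_cases h1 : P1 mU.toRep <;> by_cases h2 : P2 mV.toRep
  · rw [chi, chi, if_pos h1, if_pos h2, one_mul, one_mul, epairs]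
    norm_cast
    exact Nat.card_congr (Equiv.subtypeEquivRight fun p =>
      ⟨fun he => ⟨he, hforce _ mV mU p.1 p.2 he h1 h2⟩, fun he => he.1⟩)
  all_goals {
    haveI : IsEmpty {p : Hom mV.toRep W × Hom W mU.toRep //
        IsExactPair p.1 p.2 ∧ ∀ v, range (p.1.f v) = S v} := by
      refine ⟨fun p => ?_⟩
      have := hback mV mU p.1.1 p.1.2 p.2.1 p.2.2
      tauto
    rw [Nat.card_of_isEmpty]
    simp [chi, h1, h2]
  }

theorem hmul_chi_eq_one (P1 P2 : Rep Q K → Prop) (W : Rep Q K)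
    (S : ∀ v, Submodule K (Fin (W.d v) → K))
    (hS : ∀ (e : Q.E) (x : Fin (W.d (Q.src e)) → K),
      x ∈ S (Q.src e) → W.m e x ∈ S (Q.tgt e))
    (hforce : ∀ (δ : Q.V → ℕ) (mV : RepOf Q K δ) (mU : RepOf Q K fun v => W.d v - δ v)
      (ι : Hom mV.toRep W) (π : Hom W mU.toRep), IsExactPair ι π → P1 mU.toRep →
      P2 mV.toRep → ∀ v, range (ι.f v) = S v)
    (hback : ∀ (mV : RepOf Q K (dimS W S)) (mU : RepOf Q K fun v => W.d v - dimS W S v)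
      (ι : Hom mV.toRep W) (π : Hom W mU.toRep), IsExactPair ι π →
      (∀ v, range (ι.f v) = S v) → P1 mU.toRep ∧ P2 mV.toRep) :
    hmul (chi P1) (chi P2) W = 1 := by
  classical
  have hGq : ((glcard Q K (dimS W S) : ℚ) * (glcard Q K fun v => W.d v - dimS W S v)) ≠ 0 := by
    have h1 := glcard_pos (Q := Q) (K := K) (dimS W S)
    have h2 := glcard_pos (Q := Q) (K := K) (fun v => W.d v - dimS W S v)
    positivity
  show (∑ᶠ (δ : Q.V → ℕ) (_ : ∀ v, δ v ≤ W.d v) (mV : RepOf Q K δ)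
      (mU : RepOf Q K fun v => W.d v - δ v),
    chi P1 mU.toRep * chi P2 mV.toRep * (epairs mU.toRep mV.toRep W : ℚ) /
      ((glcard Q K δ : ℚ) * (glcard Q K fun v => W.d v - δ v))) = 1
  rw [finsum_eq_single _ (dimS W S) ?_]
  · rw [finsum_eq_if, if_pos (dimS_le W S)]
    letI : Fintype (RepOf Q K (dimS W S)) := Fintype.ofFinite _
    letI : Fintype (RepOf Q K fun v => W.d v - dimS W S v) := Fintype.ofFinite _
    rw [finsum_eq_sum_of_fintype]
    have hrw : ∀ mV : RepOf Q K (dimS W S),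
        (∑ᶠ mU : RepOf Q K fun v => W.d v - dimS W S v,
          chi P1 mU.toRep * chi P2 mV.toRep * (epairs mU.toRep mV.toRep W : ℚ) /
            ((glcard Q K (dimS W S) : ℚ) * (glcard Q K fun v => W.d v - dimS W S v))) =
        ∑ mU : RepOf Q K fun v => W.d v - dimS W S v,
          (Nat.card {p : Hom mV.toRep W × Hom W mU.toRep //
            IsExactPair p.1 p.2 ∧ ∀ v, range (p.1.f v) = S v} : ℚ) /
            ((glcard Q K (dimS W S) : ℚ) * (glcard Q K fun v => W.d v - dimS W S v)) := by
      intro mV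
      rw [finsum_eq_sum_of_fintype]
      refine Finset.sum_congr rfl fun mU _ => ?_
      rw [chi_mul_chi_mul_epairs W S P1 P2 hforce hback mV mU]
    rw [Finset.sum_congr rfl fun mV _ => hrw mV]
    simp only [← Finset.sum_div]
    rw [div_eq_one_iff_eq hGq]
    have hcast : ∀ mV : RepOf Q K (dimS W S),
        (∑ mU : RepOf Q K fun v => W.d v - dimS W S v,
          (Nat.card {p : Hom mV.toRep W × Hom W mU.toRep //
            IsExactPair p.1 p.2 ∧ ∀ v, range (p.1.f v) = S v} : ℚ)) =
        ((∑ mU : RepOf Q K fun v => W.d v - dimS W S v,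
          Nat.card {p : Hom mV.toRep W × Hom W mU.toRep //
            IsExactPair p.1 p.2 ∧ ∀ v, range (p.1.f v) = S v} : ℕ) : ℚ) := by
      intro mV; push_cast; rfl
    rw [Finset.sum_congr rfl fun mV _ => hcast mV]
    rw [← Nat.cast_sum]
    have := card_big W S hS
    rw [nat_card_sigma] at this
    have h2 : ∀ mV : RepOf Q K (dimS W S),
        Nat.card ((mU : RepOf Q K fun v => W.d v - dimS W S v) ×
          {p : Hom mV.toRep W × Hom W mU.toRep //
            IsExactPair p.1 p.2 ∧ ∀ v, range (p.1.f v) = S v}) =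
        ∑ mU : RepOf Q K fun v => W.d v - dimS W S v,
          Nat.card {p : Hom mV.toRep W × Hom W mU.toRep //
            IsExactPair p.1 p.2 ∧ ∀ v, range (p.1.f v) = S v} := fun mV => nat_card_sigma _
    rw [Finset.sum_congr rfl fun mV _ => (h2 mV)] at this
    rw [this]
    push_cast
    ring
  · intro δ hδ
    rw [finsum_eq_if]
    split_ifs with hle
    · letI : Fintype (RepOf Q K δ) := Fintype.ofFinite _
      letI : Fintype (RepOf Q K fun v => W.d v - δ v) := Fintype.ofFinite _
      rw [finsum_eq_sum_of_fintype]
      refine Finset.sum_eq_zero fun mV _ => ?_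
      rw [finsum_eq_sum_of_fintype]
      refine Finset.sum_eq_zero fun mU _ => ?_
      by_cases h1 : P1 mU.toRep
      · by_cases h2 : P2 mV.toRep
        · have : epairs mU.toRep mV.toRep W = 0 := by
            rw [epairs]
            haveI : IsEmpty {p : Hom mV.toRep W × Hom W mU.toRep //
                IsExactPair p.1 p.2} := by
              refine ⟨fun p => hδ ?_⟩
              have hr := hforce δ mV mU p.1.1 p.1.2 p.2 h1 h2
              funext v
              have hinj := (p.2 v).1
              have : finrank K (range (p.1.1.f v)) = finrank K (Fin (δ v) → K) :=
                LinearMap.finrank_range_of_inj hinj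
              rw [hr v, Module.finrank_fin_fun] at this
              exact this.symm
            exact Nat.card_of_isEmpty
          rw [this]
          norm_num
        · simp [chi, h2]
      · simp [chi, h1]
    · rfl

end Generic

section IsoLemmas

theorem iso_of_sub {W L₁ L₂ : Rep Q K} (ι₁ : Hom L₁ W) (ι₂ : Hom L₂ W)
    (hinj₁ : ∀ v, Injective (ι₁.f v)) (hinj₂ : ∀ v, Injective (ι₂.f v))
    (hr : ∀ v, range (ι₁.f v) = range (ι₂.f v)) : repIso L₁ L₂ := by
  have hle : ∀ v, range (ι₁.f v) ≤ range (ι₂.f v) := fun v => (hr v).le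
  refine ⟨⟨fun v => colift (ι₂.f v) (hinj₂ v) (ι₁.f v) (hle v), fun e => ?_⟩, fun v => ?_⟩
  · apply LinearMap.ext; intro x
    apply hinj₂ (Q.tgt e)
    have c1 := colift_apply (ι₂.f (Q.tgt e)) (hinj₂ (Q.tgt e)) (ι₁.f (Q.tgt e))
      (hle (Q.tgt e)) (L₁.m e x)
    have c2 := colift_apply (ι₂.f (Q.src e)) (hinj₂ (Q.src e)) (ι₁.f (Q.src e))
      (hle (Q.src e)) x
    have h1 := LinearMap.congr_fun (ι₁.comm e) x
    have h2 := LinearMap.congr_fun (ι₂.comm e)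
      (colift (ι₂.f (Q.src e)) (hinj₂ (Q.src e)) (ι₁.f (Q.src e)) (hle (Q.src e)) x)
    simp only [LinearMap.coe_comp, Function.comp_apply] at h1 h2 ⊢
    rw [c1, h1, h2, c2]
  · constructor
    · intro a b hab
      apply hinj₁ v
      have ca := colift_apply (ι₂.f v) (hinj₂ v) (ι₁.f v) (hle v) a
      have cb := colift_apply (ι₂.f v) (hinj₂ v) (ι₁.f v) (hle v) b
      rw [← ca, ← cb]
      exact congrArg _ hab
    · intro y
      have : ι₂.f v y ∈ range (ι₁.f v) := by rw [hr v]; exact ⟨y, rfl⟩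
      obtain ⟨x, hx⟩ := this
      refine ⟨x, hinj₂ v ?_⟩
      rw [colift_apply]
      exact hx

theorem iso_of_quot {W N₁ N₂ : Rep Q K} (π₁ : Hom W N₁) (π₂ : Hom W N₂)
    (hs₁ : ∀ v, Surjective (π₁.f v)) (hs₂ : ∀ v, Surjective (π₂.f v))
    (hk : ∀ v, ker (π₁.f v) = ker (π₂.f v)) : repIso N₁ N₂ := by
  have hle : ∀ v, ker (π₁.f v) ≤ ker (π₂.f v) := fun v => (hk v).le
  refine ⟨⟨fun v => descend (π₁.f v) (π₂.f v) (hs₁ v) (hle v), fun e => ?_⟩, fun v => ?_⟩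
  · apply LinearMap.ext; intro z
    obtain ⟨x, rfl⟩ := hs₁ (Q.src e) z
    have h1 := LinearMap.congr_fun (π₁.comm e) x
    have h2 := LinearMap.congr_fun (π₂.comm e) x
    simp only [LinearMap.coe_comp, Function.comp_apply] at h1 h2 ⊢
    rw [← h1, descend_apply, descend_apply, ← h2]
  · constructor
    · intro a b hab
      obtain ⟨x, rfl⟩ := hs₁ v a
      obtain ⟨y, rfl⟩ := hs₁ v b
      rw [descend_apply, descend_apply] at hab
      have : x - y ∈ ker (π₂.f v) := by rw [LinearMap.mem_ker, map_sub, hab, sub_self]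
      rw [← hk v, LinearMap.mem_ker, map_sub, sub_eq_zero] at this
      exact this
    · intro y
      obtain ⟨x, rfl⟩ := hs₂ v y
      exact ⟨π₁.f v x, descend_apply _ _ _ _ x⟩

end IsoLemmas

section Pair1

variable (k : Q.V)

/-- The canonical torsion subspaces for the pair `(⟨S_k⟩, mod(Q)_k)`. -/
noncomputable def tS (W : Rep Q K) : ∀ v, Submodule K (Fin (W.d v) → K) := fun v =>
  (⨅ e : Q.E, ⨅ h : Q.src e = v,
    ker ((W.m e).comp (LinearMap.funLeft K K (Fin.cast (congrArg W.d h))))) ⊓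
  (⨅ _h : v ≠ k, (⊥ : Submodule K (Fin (W.d v) → K)))

theorem mem_tS {W : Rep Q K} {v : Q.V} (x : Fin (W.d v) → K) : x ∈ tS k W v ↔
    (∀ e (h : Q.src e = v), W.m e (x ∘ Fin.cast (congrArg W.d h)) = 0) ∧ (v ≠ k → x = 0) := by
  simp only [tS, Submodule.mem_inf, Submodule.mem_iInf, LinearMap.mem_ker, Submodule.mem_bot]
  exact Iff.rfl

theorem tS_src (W : Rep Q K) (e : Q.E) (x : Fin (W.d (Q.src e)) → K)
    (hx : x ∈ tS k W (Q.src e)) : W.m e x = 0 := by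
  obtain ⟨h1, -⟩ := (mem_tS k x).1 hx
  have := h1 e rfl
  rwa [comp_cast_eq] at this

theorem tS_hS (W : Rep Q K) : ∀ (e : Q.E) (x : Fin (W.d (Q.src e)) → K),
    x ∈ tS k W (Q.src e) → W.m e x ∈ tS k W (Q.tgt e) := by
  intro e x hx
  rw [tS_src k W e x hx]
  exact Submodule.zero_mem _

theorem tS_bot (W : Rep Q K) {v : Q.V} (hv : v ≠ k) : tS k W v = ⊥ := by
  apply le_antisymm _ bot_le
  intro x hx
  rw [Submodule.mem_bot]
  exact ((mem_tS k x).1 hx).2 hv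

theorem dimS_tS_ne (W : Rep Q K) {v : Q.V} (hv : v ≠ k) : dimS W (tS k W) v = 0 := by
  rw [dimS, tS_bot k W hv, finrank_bot]

/-- Build a hom from the simple at `k` out of an element of `tS k M k`. -/
noncomputable def homOf (M : Rep Q K) (x : Fin (M.d k) → K)
    (hx : ∀ e (h : Q.src e = k), M.m e (x ∘ Fin.cast (congrArg M.d h)) = 0) :
    Hom (simpleAt Q K k) M where
  f v := if h : v = k then
      (LinearMap.proj (⟨0, by simp [simpleAt, h]⟩ : Fin ((simpleAt Q K k).d v))).smulRight
        (x ∘ Fin.cast (congrArg M.d h))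
    else 0
  comm e := by
    apply LinearMap.ext; intro y
    simp only [LinearMap.coe_comp, Function.comp_apply]
    have hm : (simpleAt Q K k).m e y = 0 := rfl
    rw [hm, map_zero]
    by_cases hsrc : Q.src e = k
    · rw [dif_pos hsrc]
      simp only [LinearMap.smulRight_apply, LinearMap.proj_apply, map_smul]
      rw [hx e hsrc, smul_zero]
    · rw [dif_neg hsrc]
      simp

theorem homS_zero_iff (M : Rep Q K) :
    (∀ φ : Hom (simpleAt Q K k) M, ∀ v, φ.f v = 0) ↔ tS k M k = ⊥ := by
  constructor
  · intro hall
    apply (Submodule.eq_bot_iff _).2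
    intro x hx
    obtain ⟨h1, -⟩ := (mem_tS k x).1 hx
    have hz := hall (homOf k M x h1) k
    have : (homOf k M x h1).f k (fun _ => 1) = x := by
      simp only [homOf, dif_pos rfl]
      rw [dif_pos trivial]
      simp only [LinearMap.smulRight_apply, LinearMap.proj_apply, one_smul]
      exact comp_cast_eq x _
    rw [hz] at this
    simpa using this.symm
  · intro hbot φ v
    by_cases hv : v = k
    · subst hv
      apply LinearMap.ext; intro y
      have hx : φ.f v (fun _ => 1) ∈ tS v M v := by
        rw [mem_tS]
        refine ⟨fun e h => ?_, fun h => absurd rfl h⟩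
        subst h
        rw [comp_cast_eq]
        have hc := LinearMap.congr_fun (φ.comm e) (fun _ => (1:K))
        simp only [LinearMap.coe_comp, Function.comp_apply] at hc
        rw [← hc]
        have hm : (simpleAt Q K (Q.src e)).m e (fun _ => (1:K)) = 0 := rfl
        rw [hm, map_zero]
      rw [hbot, Submodule.mem_bot] at hx
      have hy : y = y ⟨0, by simp [simpleAt]⟩ • (fun _ => (1:K)) := by
        funext j
        have hj : j = ⟨0, by simp [simpleAt]⟩ := by
          apply Fin.ext
          have hlt := j.isLt
          simp only [simpleAt, if_pos rfl] at hlt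
          simpa using Nat.lt_one_iff.1 hlt
        rw [hj]
        simp
      rw [hy, map_smul, hx, smul_zero]
      simp
    · apply LinearMap.ext; intro y
      have h0 : (simpleAt Q K k).d v = 0 := by simp [simpleAt, hv]
      rw [map_zero_src h0 (φ.f v) y]
      simp

theorem pair1_back (hloop : ∀ e : Q.E, Q.src e = k → Q.tgt e ≠ k) (W : Rep Q K)
    {dU : Q.V → ℕ} (mU : RepOf Q K dU) (π : Hom W mU.toRep)
    (hs : ∀ v, Surjective (π.f v)) (hk : ∀ v, ker (π.f v) = tS k W v) :
    ∀ φ : Hom (simpleAt Q K k) mU.toRep, ∀ v, φ.f v = 0 := by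
  rw [homS_zero_iff]
  apply (Submodule.eq_bot_iff _).2
  intro z hz
  obtain ⟨y, rfl⟩ := hs k z
  obtain ⟨h1, -⟩ := (mem_tS k _).1 hz
  have hy : y ∈ tS k W k := by
    rw [mem_tS]
    refine ⟨fun e h => ?_, fun h => absurd rfl h⟩
    subst h
    rw [comp_cast_eq]
    have h2 := h1 e rfl
    rw [comp_cast_eq] at h2
    have hc := LinearMap.congr_fun (π.comm e) y
    simp only [LinearMap.coe_comp, Function.comp_apply] at hc
    rw [h2] at hc
    have : W.m e y ∈ ker (π.f (Q.tgt e)) := hc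
    rw [hk (Q.tgt e), tS_bot _ W (hloop e rfl), Submodule.mem_bot] at this
    exact this
  have hker : y ∈ ker (π.f k) := by rw [hk k]; exact hy
  exact LinearMap.mem_ker.1 hker

theorem pair1_force (hloop : ∀ e : Q.E, Q.src e = k → Q.tgt e ≠ k) (W : Rep Q K)
    {dV dU : Q.V → ℕ} (mV : RepOf Q K dV) (mU : RepOf Q K dU)
    (ι : Hom mV.toRep W) (π : Hom W mU.toRep) (hex : IsExactPair ι π)
    (h1 : ∀ φ : Hom (simpleAt Q K k) mU.toRep, ∀ v, φ.f v = 0)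
    (h2 : ∀ v, v ≠ k → dV v = 0) : ∀ v, range (ι.f v) = tS k W v := by
  intro v
  by_cases hv : v = k
  · subst hv
    apply le_antisymm
    · rintro _ ⟨y, rfl⟩
      rw [mem_tS]
      refine ⟨fun e h => ?_, fun h => absurd rfl h⟩
      subst h
      rw [comp_cast_eq]
      have hc := LinearMap.congr_fun (ι.comm e) y
      simp only [LinearMap.coe_comp, Function.comp_apply] at hc
      rw [← hc]
      have hz : mV e y = 0 := eq_zero_cod (h2 (Q.tgt e) (hloop e rfl)) _
      have hz' : (RepOf.toRep mV).m e y = 0 := hz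
      rw [hz', map_zero]
    · intro x hx
      rw [(hex v).2.2, LinearMap.mem_ker]
      have hU : tS v mU.toRep v = ⊥ := (homS_zero_iff v mU.toRep).1 h1
      have hmem : π.f v x ∈ tS v mU.toRep v := by
        rw [mem_tS]
        refine ⟨fun e h => ?_, fun h => absurd rfl h⟩
        subst h
        rw [comp_cast_eq]
        have hc := LinearMap.congr_fun (π.comm e) x
        simp only [LinearMap.coe_comp, Function.comp_apply] at hc
        rw [← hc, tS_src _ W e x hx, map_zero]
      rw [hU, Submodule.mem_bot] at hmem
      exact hmem
  · rw [tS_bot k W hv]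
    apply le_antisymm _ bot_le
    rintro _ ⟨y, rfl⟩
    rw [Submodule.mem_bot, eq_zero_cod (h2 v hv) y]; exact map_zero (ι.f v)

end Pair1

theorem pair1_torsion (k : Q.V) (hloop : ∀ e : Q.E, Q.src e = k → Q.tgt e ≠ k) :
    IsTorsionPair (fun M : Rep Q K => ∀ v, v ≠ k → M.d v = 0)
      (fun M => ∀ φ : Hom (simpleAt Q K k) M, ∀ v, φ.f v = 0) := by
  refine ⟨?_, ?_, ?_, ?_, ?_⟩
  · intro M N h
    constructor <;> intro hM v hv
    · rw [← repIso_d h v]; exact hM v hv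
    · rw [repIso_d h v]; exact hM v hv
  · intro M N h
    exact ⟨fun hM => homClass_inv_left _ h hM, fun hN => homClass_inv_left _ h.symm hN⟩
  · intro M N φ hT hF v
    by_cases hv : v = k
    · subst hv
      apply LinearMap.ext; intro x
      have hbot := (homS_zero_iff v N).1 hF
      have hmem : φ.f v x ∈ tS v N v := by
        rw [mem_tS]
        refine ⟨fun e h => ?_, fun h => absurd rfl h⟩
        subst h
        rw [comp_cast_eq]
        have hc := LinearMap.congr_fun (φ.comm e) x
        simp only [LinearMap.coe_comp, Function.comp_apply] at hc
        rw [← hc, eq_zero_cod (hT (Q.tgt e) (hloop e rfl)) (M.m e x), map_zero]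
      rw [hbot, Submodule.mem_bot] at hmem
      rw [hmem]
      simp
    · apply LinearMap.ext; intro x
      rw [map_zero_src (hT v hv) (φ.f v) x]
      simp
  · intro W
    have hA := cardA W (tS k W) (tS_hS k W)
    have hB := cardB W (tS k W) (tS_hS k W)
    obtain ⟨⟨mV, ι, hι⟩⟩ := (Nat.card_ne_zero.1 (by
      rw [hA]; exact (glcard_pos (Q := Q) (K := K) _).ne')).1
    obtain ⟨⟨mU, π, hπ⟩⟩ := (Nat.card_ne_zero.1 (by
      rw [hB]; exact (glcard_pos (Q := Q) (K := K) _).ne')).1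
    refine ⟨mV.toRep, mU.toRep, ι, π, fun v hv => dimS_tS_ne k W hv,
      pair1_back k hloop W mU π (fun v => (hπ v).1) (fun v => (hπ v).2), fun v =>
      ⟨(hι v).1, (hπ v).1, by rw [(hι v).2, (hπ v).2]⟩⟩
  · intro W L₁ N₁ L₂ N₂ ι₁ π₁ ι₂ π₂ hT1 hF1 hex1 hT2 hF2 hex2
    have hr1 : ∀ v, range (ι₁.f v) = tS k W v :=
      pair1_force k hloop W L₁.m N₁.m ι₁ π₁ hex1 hF1 hT1
    have hr2 : ∀ v, range (ι₂.f v) = tS k W v :=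
      pair1_force k hloop W L₂.m N₂.m ι₂ π₂ hex2 hF2 hT2
    constructor
    · exact iso_of_sub ι₁ ι₂ (fun v => (hex1 v).1) (fun v => (hex2 v).1)
        (fun v => (hr1 v).trans (hr2 v).symm)
    · exact iso_of_quot π₁ π₂ (fun v => (hex1 v).2.1) (fun v => (hex2 v).2.1)
        (fun v => by rw [← (hex1 v).2.2, ← (hex2 v).2.2, hr1 v, hr2 v])

theorem pair1_hmul (k : Q.V) (hloop : ∀ e : Q.E, Q.src e = k → Q.tgt e ≠ k) :
    hmul (chi (fun M : Rep Q K => ∀ φ : Hom (simpleAt Q K k) M, ∀ v, φ.f v = 0))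
      (chi (fun M : Rep Q K => ∀ v, v ≠ k → M.d v = 0)) = (fun _ => (1 : ℚ)) := by
  funext W
  apply hmul_chi_eq_one _ _ W (tS k W) (tS_hS k W)
  · intro δ mV mU ι π hex h1 h2
    exact pair1_force k hloop W mV mU ι π hex h1 h2
  · intro mV mU ι π hex hr
    refine ⟨pair1_back k hloop W mU π (fun v => (hex v).2.1) (fun v => ?_), fun v hv =>
      dimS_tS_ne k W hv⟩
    rw [← (hex v).2.2]
    exact hr v

section Pair2

variable (k : Q.V)

/-- The canonical torsion subspaces for the pair `(mod(Q)^k, ⟨S_k⟩)`. -/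
noncomputable def rS (W : Rep Q K) : ∀ v, Submodule K (Fin (W.d v) → K) := fun v =>
  (⨆ _h : v ≠ k, (⊤ : Submodule K (Fin (W.d v) → K))) ⊔
  ⨆ e : Q.E, ⨆ h : Q.tgt e = v,
    range ((LinearMap.funLeft K K (Fin.cast (congrArg W.d h).symm)).comp (W.m e))

theorem rS_top (W : Rep Q K) {v : Q.V} (hv : v ≠ k) : rS k W v = ⊤ := by
  apply le_antisymm le_top
  calc (⊤ : Submodule K (Fin (W.d v) → K)) ≤ ⨆ _h : v ≠ k, (⊤ : Submodule K (Fin (W.d v) → K)) :=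
        le_iSup (fun _h : v ≠ k => (⊤ : Submodule K (Fin (W.d v) → K))) hv
    _ ≤ rS k W v := le_sup_left

theorem rS_mem_map (W : Rep Q K) (e : Q.E) (x : Fin (W.d (Q.src e)) → K) :
    W.m e x ∈ rS k W (Q.tgt e) := by
  apply Submodule.mem_sup_right
  apply Submodule.mem_iSup_of_mem e
  apply Submodule.mem_iSup_of_mem rfl
  refine ⟨x, ?_⟩
  simp only [LinearMap.coe_comp, Function.comp_apply]
  exact funLeft_cast_refl _ _

theorem rS_hS (W : Rep Q K) : ∀ (e : Q.E) (x : Fin (W.d (Q.src e)) → K),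
    x ∈ rS k W (Q.src e) → W.m e x ∈ rS k W (Q.tgt e) := fun e x _ => rS_mem_map k W e x

theorem rS_le (W : Rep Q K) {v : Q.V} {p : Submodule K (Fin (W.d v) → K)}
    (h1 : ∀ _h : v ≠ k, (⊤ : Submodule K (Fin (W.d v) → K)) ≤ p)
    (h2 : ∀ e (h : Q.tgt e = v) (x : Fin (W.d (Q.src e)) → K),
      LinearMap.funLeft K K (Fin.cast (congrArg W.d h).symm) (W.m e x) ∈ p) :
    rS k W v ≤ p := by
  apply sup_le (iSup_le h1)
  apply iSup_le; intro e
  apply iSup_le; intro h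
  rintro _ ⟨x, rfl⟩
  exact h2 e h x

theorem dimS_rS_ne (W : Rep Q K) {v : Q.V} (hv : v ≠ k) : dimS W (rS k W) v = W.d v := by
  rw [dimS, rS_top k W hv, finrank_top, Module.finrank_fin_fun]

theorem homToS_zero_iff (M : Rep Q K) :
    (∀ φ : Hom M (simpleAt Q K k), ∀ v, φ.f v = 0) ↔ rS k M k = ⊤ := by
  constructor
  · intro hall
    by_contra hne
    -- build a nonzero functional vanishing on rS k M k
    set p := rS k M k with hp
    haveI : Nontrivial ((Fin (M.d k) → K) ⧸ p) := by
      rcases subsingleton_or_nontrivial ((Fin (M.d k) → K) ⧸ p) with h | h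
      · exact absurd (Submodule.Quotient.subsingleton_iff.1 h) hne
      · exact h
    have hpos : 0 < finrank K ((Fin (M.d k) → K) ⧸ p) := Module.finrank_pos
    set e' : ((Fin (M.d k) → K) ⧸ p) ≃ₗ[K]
        (Fin (finrank K ((Fin (M.d k) → K) ⧸ p)) → K) :=
      LinearEquiv.ofFinrankEq _ _ (by rw [Module.finrank_fin_fun]) with he'
    set α : (Fin (M.d k) → K) →ₗ[K] K :=
      (LinearMap.proj (⟨0, hpos⟩ : Fin (finrank K ((Fin (M.d k) → K) ⧸ p)))).comp
        (e'.toLinearMap.comp p.mkQ) with hα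
    have hα0 : ∀ x ∈ p, α x = 0 := by
      intro x hx
      have : p.mkQ x = 0 := by
        rw [Submodule.mkQ_apply, Submodule.Quotient.mk_eq_zero]
        exact hx
      simp [hα, this]
    have hα1 : ∃ x, α x = 1 := by
      obtain ⟨x, hx⟩ := Submodule.mkQ_surjective p (e'.symm (fun _ => 1))
      refine ⟨x, ?_⟩
      simp only [hα, LinearMap.coe_comp, Function.comp_apply, LinearEquiv.coe_coe]
      rw [hx, LinearEquiv.apply_symm_apply]
      rfl
    obtain ⟨x₀, hx₀⟩ := hα1
    -- build the hom M → S_k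
    have hcomm : ∀ (e : Q.E),
        ((fun v => if h : v = k then
            (LinearMap.pi fun _ : Fin ((simpleAt Q K k).d v) =>
              α.comp (LinearMap.funLeft K K (Fin.cast (congrArg M.d h).symm)))
          else 0) (Q.tgt e)).comp (M.m e) =
        ((simpleAt Q K k).m e).comp
          ((fun v => if h : v = k then
            (LinearMap.pi fun _ : Fin ((simpleAt Q K k).d v) =>
              α.comp (LinearMap.funLeft K K (Fin.cast (congrArg M.d h).symm)))
          else 0) (Q.src e)) := by
      intro e
      have hz : ((simpleAt Q K k).m e) = 0 := rfl
      rw [hz, LinearMap.zero_comp]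
      dsimp only
      by_cases ht : Q.tgt e = k
      · rw [dif_pos ht]
        apply LinearMap.ext; intro x
        apply funext; intro i
        simp only [LinearMap.coe_comp, Function.comp_apply, LinearMap.pi_apply,
          LinearMap.zero_apply, Pi.zero_apply]
        apply hα0
        subst ht
        apply Submodule.mem_sup_right
        apply Submodule.mem_iSup_of_mem e
        apply Submodule.mem_iSup_of_mem rfl
        exact ⟨x, rfl⟩
      · rw [dif_neg ht]
        simp
    have hzero := hall ⟨(fun v => if h : v = k then
        (LinearMap.pi fun _ : Fin ((simpleAt Q K k).d v) =>
          α.comp (LinearMap.funLeft K K (Fin.cast (congrArg M.d h).symm)))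
      else 0), hcomm⟩ k
    have : α x₀ = 0 := by
      dsimp only at hzero
      rw [dif_pos rfl] at hzero
      have h2 := congr_fun (LinearMap.congr_fun hzero x₀) ⟨0, by simp [simpleAt]⟩
      simp only [LinearMap.pi_apply, LinearMap.coe_comp, Function.comp_apply,
        LinearMap.zero_apply, Pi.zero_apply] at h2
      rwa [funLeft_cast_refl] at h2
    rw [hx₀] at this
    exact one_ne_zero this
  · intro htop φ v
    by_cases hv : v = k
    · subst hv
      have hle : rS v M v ≤ ker (φ.f v) := by
        apply rS_le
        · exact fun h => absurd rfl h
        · intro e h y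
          cases h
          rw [LinearMap.mem_ker, funLeft_cast_refl]
          have hc := LinearMap.congr_fun (φ.comm e) y
          simp only [LinearMap.coe_comp, Function.comp_apply] at hc
          rw [hc]
          have hz : ((simpleAt Q K (Q.tgt e)).m e) ((φ.f (Q.src e)) y) = 0 := rfl
          rw [hz]
      apply LinearMap.ext; intro x
      have hx : x ∈ rS v M v := by rw [htop]; trivial
      rw [LinearMap.mem_ker.1 (hle hx)]
      simp
    · apply LinearMap.ext; intro x
      rw [eq_zero_cod (by simp [simpleAt, hv]) (φ.f v x)]
      simp

theorem map_rS_le (W : Rep Q K) {dV : Q.V → ℕ} (mV : RepOf Q K dV) (ι : Hom mV.toRep W) :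
    Submodule.map (ι.f k) (rS k mV.toRep k) ≤ rS k W k := by
  rw [Submodule.map_le_iff_le_comap]
  apply rS_le
  · exact fun h => absurd rfl h
  · intro e h
    cases h
    intro y
    rw [Submodule.mem_comap, funLeft_cast_refl]
    have hc := LinearMap.congr_fun (ι.comm e) y
    simp only [LinearMap.coe_comp, Function.comp_apply] at hc
    show (ι.f (Q.tgt e)) ((mV.toRep.m e) y) ∈ rS (Q.tgt e) W (Q.tgt e)
    rw [hc]
    exact rS_mem_map _ W e _

theorem pair2_T_of_sub (hloop : ∀ e : Q.E, Q.src e = k → Q.tgt e ≠ k) (W : Rep Q K)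
    {dV : Q.V → ℕ} (mV : RepOf Q K dV) (ι : Hom mV.toRep W)
    (hinj : ∀ v, Injective (ι.f v)) (hr : ∀ v, range (ι.f v) = rS k W v) :
    ∀ φ : Hom mV.toRep (simpleAt Q K k), ∀ v, φ.f v = 0 := by
  rw [homToS_zero_iff]
  have hmap : Submodule.map (ι.f k) (rS k mV.toRep k) = Submodule.map (ι.f k) ⊤ := by
    rw [Submodule.map_top, hr k]
    apply le_antisymm (map_rS_le k W mV ι)
    apply rS_le
    · exact fun h => absurd rfl h
    · intro e h x
      cases h
      rw [funLeft_cast_refl]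
      have hsrc : Q.src e ≠ Q.tgt e := fun hs => absurd rfl (hloop e hs)
      have hx : ι.f (Q.src e) ∈ Set.univ := trivial
      have hxr : x ∈ range (ι.f (Q.src e)) := by
        rw [hr (Q.src e), rS_top (Q.tgt e) W hsrc]
        trivial
      obtain ⟨y, rfl⟩ := hxr
      have hc := LinearMap.congr_fun (ι.comm e) y
      simp only [LinearMap.coe_comp, Function.comp_apply] at hc
      rw [← hc]
      exact Submodule.mem_map_of_mem (rS_mem_map _ mV.toRep e y)
  exact Submodule.map_injective_of_injective (hinj k) hmap

theorem pair2_force (hloop : ∀ e : Q.E, Q.src e = k → Q.tgt e ≠ k) (W : Rep Q K)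
    {dV dU : Q.V → ℕ} (mV : RepOf Q K dV) (mU : RepOf Q K dU)
    (ι : Hom mV.toRep W) (π : Hom W mU.toRep) (hex : IsExactPair ι π)
    (h1 : ∀ v, v ≠ k → dU v = 0)
    (h2 : ∀ φ : Hom mV.toRep (simpleAt Q K k), ∀ v, φ.f v = 0) :
    ∀ v, range (ι.f v) = rS k W v := by
  intro v
  by_cases hv : v = k
  · subst hv
    apply le_antisymm
    · rintro _ ⟨y, rfl⟩
      have htop := (homToS_zero_iff v mV.toRep).1 h2
      have hy : y ∈ rS v mV.toRep v := by rw [htop]; trivial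
      exact map_rS_le v W mV ι (Submodule.mem_map_of_mem hy)
    · apply rS_le
      · exact fun h => absurd rfl h
      · intro e h x
        cases h
        rw [funLeft_cast_refl, (hex (Q.tgt e)).2.2, LinearMap.mem_ker]
        have hc := LinearMap.congr_fun (π.comm e) x
        simp only [LinearMap.coe_comp, Function.comp_apply] at hc
        rw [hc]
        have hsrc : Q.src e ≠ Q.tgt e := fun hs => absurd rfl (hloop e hs)
        rw [eq_zero_cod (h1 (Q.src e) hsrc) ((π.f (Q.src e)) x)]; exact map_zero (mU.toRep.m e)
  · rw [rS_top k W hv, (hex v).2.2]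
    apply le_antisymm le_top
    intro x _
    rw [LinearMap.mem_ker, eq_zero_cod (h1 v hv) ((π.f v) x)]; rfl

theorem pair2_torsion (k : Q.V) (hloop : ∀ e : Q.E, Q.src e = k → Q.tgt e ≠ k) :
    IsTorsionPair (fun M : Rep Q K => ∀ φ : Hom M (simpleAt Q K k), ∀ v, φ.f v = 0)
      (fun M => ∀ v, v ≠ k → M.d v = 0) := by
  refine ⟨?_, ?_, ?_, ?_, ?_⟩
  · intro M N h
    exact ⟨fun hM => homClass_inv_right _ h hM, fun hN => homClass_inv_right _ h.symm hN⟩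
  · intro M N h
    constructor <;> intro hM v hv
    · rw [← repIso_d h v]; exact hM v hv
    · rw [repIso_d h v]; exact hM v hv
  · intro M N φ hT hF v
    by_cases hv : v = k
    · subst hv
      have htop := (homToS_zero_iff v M).1 hT
      have hle : rS v M v ≤ ker (φ.f v) := by
        apply rS_le
        · exact fun h => absurd rfl h
        · intro e h y
          cases h
          rw [LinearMap.mem_ker, funLeft_cast_refl]
          have hc := LinearMap.congr_fun (φ.comm e) y
          simp only [LinearMap.coe_comp, Function.comp_apply] at hc
          rw [hc]
          have hsrc : Q.src e ≠ Q.tgt e := fun hs => absurd rfl (hloop e hs)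
          rw [eq_zero_cod (hF (Q.src e) hsrc) ((φ.f (Q.src e)) y), map_zero]
      apply LinearMap.ext; intro x
      have hx : x ∈ rS v M v := by rw [htop]; trivial
      rw [LinearMap.mem_ker.1 (hle hx)]
      simp
    · apply LinearMap.ext; intro x
      rw [eq_zero_cod (hF v hv) (φ.f v x)]
      simp
  · intro W
    have hA := cardA W (rS k W) (rS_hS k W)
    have hB := cardB W (rS k W) (rS_hS k W)
    obtain ⟨⟨mV, ι, hι⟩⟩ := (Nat.card_ne_zero.1 (by
      rw [hA]; exact (glcard_pos (Q := Q) (K := K) _).ne')).1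
    obtain ⟨⟨mU, π, hπ⟩⟩ := (Nat.card_ne_zero.1 (by
      rw [hB]; exact (glcard_pos (Q := Q) (K := K) _).ne')).1
    refine ⟨mV.toRep, mU.toRep, ι, π,
      pair2_T_of_sub k hloop W mV ι (fun v => (hι v).1) (fun v => (hι v).2),
      fun v hv => by
        show W.d v - dimS W (rS k W) v = 0
        rw [dimS_rS_ne k W hv, Nat.sub_self], fun v =>
      ⟨(hι v).1, (hπ v).1, by rw [(hι v).2, (hπ v).2]⟩⟩
  · intro W L₁ N₁ L₂ N₂ ι₁ π₁ ι₂ π₂ hT1 hF1 hex1 hT2 hF2 hex2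
    have hr1 : ∀ v, range (ι₁.f v) = rS k W v :=
      pair2_force k hloop W L₁.m N₁.m ι₁ π₁ hex1 hF1 hT1
    have hr2 : ∀ v, range (ι₂.f v) = rS k W v :=
      pair2_force k hloop W L₂.m N₂.m ι₂ π₂ hex2 hF2 hT2
    constructor
    · exact iso_of_sub ι₁ ι₂ (fun v => (hex1 v).1) (fun v => (hex2 v).1)
        (fun v => (hr1 v).trans (hr2 v).symm)
    · exact iso_of_quot π₁ π₂ (fun v => (hex1 v).2.1) (fun v => (hex2 v).2.1)
        (fun v => by rw [← (hex1 v).2.2, ← (hex2 v).2.2, hr1 v, hr2 v])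

theorem pair2_hmul (k : Q.V) (hloop : ∀ e : Q.E, Q.src e = k → Q.tgt e ≠ k) :
    hmul (chi (fun M : Rep Q K => ∀ v, v ≠ k → M.d v = 0))
      (chi (fun M : Rep Q K => ∀ φ : Hom M (simpleAt Q K k), ∀ v, φ.f v = 0)) =
      (fun _ => (1 : ℚ)) := by
  funext W
  apply hmul_chi_eq_one _ _ W (rS k W) (rS_hS k W)
  · intro δ mV mU ι π hex h1 h2
    exact pair2_force k hloop W mV mU ι π hex h1 h2
  · intro mV mU ι π hex hr
    constructor
    · intro v hv
      show W.d v - dimS W (rS k W) v = 0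
      rw [dimS_rS_ne k W hv, Nat.sub_self]
    · exact pair2_T_of_sub k hloop W mV ι (fun v => (hex v).1) hr

end Pair2

/-- Let `k` be a vertex of `Q` with no loops at `k`.
Let `mod(Q)_k = {M : Hom(S_k, M) = 0}`, `mod(Q)^k = {M : Hom(M, S_k) = 0}` and let
`⟨S_k⟩` be the subcategory of modules all of whose composition factors are `S_k`
(i.e. modules supported at the vertex `k`).  Then `(⟨S_k⟩, mod(Q)_k)` and
`(mod(Q)^k, ⟨S_k⟩)` are torsion pairs, and in the completed Hall algebra
`χ(mod(Q)_k)·χ(⟨S_k⟩) = χ = χ(⟨S_k⟩)·χ(mod(Q)^k)`. -/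

theorem stmt18 (Q : FQuiver) (K : Type) [Field K] [Fintype K] (k : Q.V)
    (hloop : ∀ e : Q.E, Q.src e = k → Q.tgt e ≠ k) :
    IsTorsionPair (fun M : Rep Q K => ∀ v, v ≠ k → M.d v = 0)
      (fun M => ∀ φ : Hom (simpleAt Q K k) M, ∀ v, φ.f v = 0) ∧
    IsTorsionPair (fun M : Rep Q K => ∀ φ : Hom M (simpleAt Q K k), ∀ v, φ.f v = 0)
      (fun M => ∀ v, v ≠ k → M.d v = 0) ∧
    hmul (chi (fun M : Rep Q K => ∀ φ : Hom (simpleAt Q K k) M, ∀ v, φ.f v = 0))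
        (chi (fun M : Rep Q K => ∀ v, v ≠ k → M.d v = 0)) = (fun _ => (1 : ℚ)) ∧
    hmul (chi (fun M : Rep Q K => ∀ v, v ≠ k → M.d v = 0))
        (chi (fun M : Rep Q K => ∀ φ : Hom M (simpleAt Q K k), ∀ v, φ.f v = 0)) =
      (fun _ => (1 : ℚ)) := by
  exact ⟨pair1_torsion k hloop, pair2_torsion k hloop, pair1_hmul k hloop, pair2_hmul k hloop⟩

end QP
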